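/- Let d ≥ 1, R a commutative ring in which d is invertible, π ∈ R invertible, and H = π(d·x^d + a·x) ∈ R[[a,x]]. Then H·R[[a,x]] ∩ (⊕_{i=0}^{d−1} R[[a]]·x^i) = {0}; that is, if H·B is a polynomial in x of degree < d for some B ∈ R[[a,x]], then B = 0. -/

import Mathlib

open PowerSeries


/-- If `H·B` is a polynomial in `x` of degree `< d`, where
`H = π(d x^d + a x) ∈ R[[a]][[x]]` with `d` and `π` invertible, then `B = 0`. -/
theorem H_mul_eq_poly_imp_zero (d : ℕ) (hd : 1 ≤ d)
    (R : Type*) [CommRing R] (hdu : IsUnit (d : R)) (π : R) (hπ : IsUnit π)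
    (B : PowerSeries (PowerSeries R)) (c : Fin d → PowerSeries R)
    (h : PowerSeries.C (R := PowerSeries R) (PowerSeries.C (R := R) π)
          * ((d : PowerSeries (PowerSeries R)) * PowerSeries.X ^ d
             + PowerSeries.C (R := PowerSeries R) PowerSeries.X * PowerSeries.X) * B
        = ∑ i : Fin d, PowerSeries.C (R := PowerSeries R) (c i) * PowerSeries.X ^ (i : ℕ)) :
    B = 0 := by
  obtain ⟨e, rfl⟩ : ∃ e, d = e + 1 := ⟨d - 1, (Nat.succ_pred_eq_of_pos hd).symm⟩
  have h2 : C (R := PowerSeries R) (C (R := R) π * ((e+1 : ℕ) : PowerSeries R)) * (X ^ (e+1) * B)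
      + C (R := PowerSeries R) (C (R := R) π * X) * (X * B)
      = ∑ i : Fin (e+1), C (R := PowerSeries R) (c i) * X ^ (i : ℕ) := by
    rw [← h, map_mul, map_mul, map_natCast]; ring
  have hkey : ∀ j : ℕ, ((e+1 : ℕ) : PowerSeries R) * coeff (R := PowerSeries R) j B
      = - (X * coeff (R := PowerSeries R) (j + e) B) := by
    intro j
    have h' := congrArg (PowerSeries.coeff (R := PowerSeries R) (j + e + 1)) h2
    have hsum : PowerSeries.coeff (R := PowerSeries R) (j + e + 1)
        (∑ i : Fin (e+1), C (R := PowerSeries R) (c i) * X ^ (i : ℕ)) = 0 := by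
      rw [map_sum]
      refine Finset.sum_eq_zero fun i _ => ?_
      rw [coeff_C_mul, coeff_X_pow, if_neg (by omega), mul_zero]
    rw [hsum, map_add, coeff_C_mul, coeff_C_mul, coeff_succ_X_mul, show j + e + 1 = j + (e+1) by ring,
      coeff_X_pow_mul] at h'
    have hπu : IsUnit (C (R := R) π) := hπ.map (C (R := R))
    rw [← eq_neg_iff_add_eq_zero, mul_assoc, mul_assoc, ← mul_neg] at h'
    exact hπu.mul_left_cancel h'
  have hdvd : ∀ i j : ℕ, (X : PowerSeries R) ^ i ∣ coeff (R := PowerSeries R) j B := by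
    intro i
    induction i with
    | zero => intro j; simp
    | succ i ih =>
      intro j
      have hu : IsUnit ((e+1 : ℕ) : PowerSeries R) := by
        rw [← map_natCast (C (R := R))]; exact hdu.map (C (R := R))
      rw [← hu.dvd_mul_left, hkey j, dvd_neg, pow_succ']
      exact mul_dvd_mul_left X (ih (j + e))
  ext j k
  rw [map_zero, map_zero]
  exact X_pow_dvd_iff.mp (hdvd (k + 1) j) k (Nat.lt_succ_self k)
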